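/- For n, k ≥ 1: (1/k^n) · Σ over all tuples (n₀,…,n_{k−1}) of nonnegative integers summing to n of C(n; n₀,…,n_{k−1}) · max(n₀,…,n_{k−1}) / n equals the posterior single-target vulnerability of the shuffle channel on K^n under uniform prior, i.e., Σ over histograms z of max_{w ∈ K} (1/k^n)·|{x ∈ K^n : h(x) = z, x₀ = w}|, and this quantity equals (1/k^n) · Σ_{(n₀,…,n_{k−1})} C(n; n₀,…,n_{k−1}) · max_j(n_j) / n. -/

import Mathlib

/-- Histogram of a dataset: the count of each value of K in x. -/
def hist (n k : ℕ) (x : Fin n → Fin k) : Fin k → ℕ :=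
  fun v => (Finset.univ.filter fun i => x i = v).card

open Finset Nat

lemma hist_sum (n k : ℕ) (x : Fin n → Fin k) : ∑ v, hist n k x v = n := by
  classical
  have := Finset.card_eq_sum_card_fiberwise (s := (univ : Finset (Fin n)))
    (t := (univ : Finset (Fin k))) (f := x) (fun a _ => mem_univ _)
  simpa [hist] using this.symm

-- multinomial decrement identity
lemma mult_dec (k : ℕ) (z : Fin k → ℕ) (w : Fin k) (hw : 1 ≤ z w) :
    z w * Nat.multinomial univ z
      = (∑ i, z i) * Nat.multinomial univ (Function.update z w (z w - 1)) := by
  classical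
  set d := Function.update z w (z w - 1) with hd
  have hprodpos : 0 < ∏ i, (d i)! := prod_pos fun i _ => Nat.factorial_pos _
  have hprod : ∏ i, (z i)! = z w * ∏ i, (d i)! := by
    rw [← Finset.mul_prod_erase univ _ (mem_univ w), ← Finset.mul_prod_erase univ (fun i => (d i)!) (mem_univ w)]
    have h1 : (z w)! = z w * (d w)! := by
      have : z w = (z w - 1) + 1 := by omega
      rw [hd, Function.update_self]
      rw [this, Nat.factorial_succ]
      congr 1 <;> omega
    rw [h1, mul_assoc]
    congr 1
    refine congrArg _ (Finset.prod_congr rfl ?_)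
    intro i hi
    have : i ≠ w := (mem_erase.1 hi).1
    rw [hd, Function.update_of_ne this]
  have hsumd : ∑ i, d i = (∑ i, z i) - 1 := by
    rw [hd, ← Finset.sum_erase_add univ _ (mem_univ w), ← Finset.sum_erase_add univ z (mem_univ w)]
    have : ∑ i ∈ univ.erase w, Function.update z w (z w - 1) i = ∑ i ∈ univ.erase w, z i := by
      apply Finset.sum_congr rfl
      intro i hi
      exact Function.update_of_ne (mem_erase.1 hi).1 _ _
    rw [this, Function.update_self]
    have hle : z w ≤ ∑ i ∈ univ.erase w, z i + z w := Nat.le_add_left _ _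
    omega
  have hsumpos : 1 ≤ ∑ i, z i := le_trans hw (Finset.single_le_sum (fun i _ => Nat.zero_le _) (mem_univ w))
  -- multiply both sides by ∏ (d i)!
  apply Nat.eq_of_mul_eq_mul_left hprodpos
  have spec1 := Nat.multinomial_spec univ z
  have spec2 := Nat.multinomial_spec univ d
  calc (∏ i, (d i)!) * (z w * Nat.multinomial univ z)
      = z w * ((∏ i, (d i)!) * Nat.multinomial univ z) := by ring
    _ = (∏ i, (z i)!) * Nat.multinomial univ z := by rw [hprod]; ring
    _ = (∑ i, z i)! := spec1
    _ = (∑ i, z i) * ((∑ i, z i) - 1)! := by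
        have : ∑ i, z i = ((∑ i, z i) - 1) + 1 := by omega
        rw [this, Nat.factorial_succ]; congr 2 <;> omega
    _ = (∑ i, z i) * (∑ i, d i)! := by rw [hsumd]
    _ = (∑ i, z i) * ((∏ i, (d i)!) * Nat.multinomial univ d) := by rw [spec2]
    _ = (∏ i, (d i)!) * ((∑ i, z i) * Nat.multinomial univ d) := by ring

lemma sum_update_dec (k : ℕ) (z : Fin k → ℕ) (w : Fin k) (hw : 1 ≤ z w) :
    ∑ i, Function.update z w (z w - 1) i = (∑ i, z i) - 1 := by
  classical
  rw [← Finset.sum_erase_add univ _ (mem_univ w), ← Finset.sum_erase_add univ z (mem_univ w)]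
  have h : ∑ i ∈ univ.erase w, Function.update z w (z w - 1) i = ∑ i ∈ univ.erase w, z i := by
    apply Finset.sum_congr rfl
    intro i hi
    exact Function.update_of_ne (mem_erase.1 hi).1 _ _
  rw [h, Function.update_self]
  omega

lemma hist_cons (m k : ℕ) (w : Fin k) (y : Fin m → Fin k) (v : Fin k) :
    hist (m+1) k (Fin.cons w y) v = (if w = v then 1 else 0) + hist m k y v := by
  classical
  simp only [hist, Finset.card_filter]
  rw [Fin.sum_univ_succ]
  simp [Fin.cons_succ]

lemma hist_cons_eq_iff (m k : ℕ) (w : Fin k) (y : Fin m → Fin k) (z : Fin k → ℕ)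
    (hw : 1 ≤ z w) :
    hist (m+1) k (Fin.cons w y) = z ↔ hist m k y = Function.update z w (z w - 1) := by
  constructor
  · intro h
    funext v
    have hv := congrFun h v
    rw [hist_cons] at hv
    by_cases hvw : w = v
    · subst hvw
      rw [if_pos rfl] at hv
      rw [Function.update_self]
      omega
    · rw [if_neg hvw] at hv
      rw [Function.update_of_ne (Ne.symm hvw)]
      omega
  · intro h
    funext v
    rw [hist_cons, congrFun h v]
    by_cases hvw : w = v
    · subst hvw
      rw [if_pos rfl, Function.update_self]
      omega
    · rw [if_neg hvw, Function.update_of_ne (Ne.symm hvw)]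
      omega

lemma count_first (m k : ℕ) (z : Fin k → ℕ) (w : Fin k) :
    (univ.filter fun x : Fin (m+1) → Fin k => hist (m+1) k x = z ∧ x 0 = w).card
      = if 1 ≤ z w then
          (univ.filter fun y : Fin m → Fin k =>
            hist m k y = Function.update z w (z w - 1)).card
        else 0 := by
  classical
  by_cases hw : 1 ≤ z w
  · rw [if_pos hw]
    refine Finset.card_bij' (fun x _ => Fin.tail x) (fun y _ => Fin.cons w y)
      ?_ ?_ ?_ ?_
    · intro x hx
      rw [mem_filter] at hx ⊢
      obtain ⟨-, hhx, hx0⟩ := hx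
      refine ⟨mem_univ _, ?_⟩
      rw [← (hist_cons_eq_iff m k w (Fin.tail x) z hw)]
      rwa [← hx0, Fin.cons_self_tail]
    · intro y hy
      rw [mem_filter] at hy ⊢
      refine ⟨mem_univ _, ?_, Fin.cons_zero _ _⟩
      rw [hist_cons_eq_iff m k w y z hw]
      exact hy.2
    · intro x hx
      rw [mem_filter] at hx
      show Fin.cons w (Fin.tail x) = x
      rw [← hx.2.2]
      exact Fin.cons_self_tail x
    · intro y hy
      exact Fin.tail_cons _ _
  · rw [if_neg hw]
    rw [Finset.card_eq_zero, Finset.filter_eq_empty_iff]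
    rintro x - ⟨hhx, hx0⟩
    apply hw
    rw [← hhx]
    have hmem : (0 : Fin (m+1)) ∈ univ.filter fun i => x i = w := by
      simp [hx0]
    exact Finset.card_pos.2 ⟨0, hmem⟩

lemma count_hist (k : ℕ) : ∀ (n : ℕ) (z : Fin k → ℕ),
    (univ.filter fun x : Fin n → Fin k => hist n k x = z).card
      = if ∑ i, z i = n then Nat.multinomial univ z else 0 := by
  intro n
  induction n with
  | zero =>
    intro z
    have huniv : (univ : Finset (Fin 0 → Fin k)) = {fun i => i.elim0} := by
      apply Finset.eq_singleton_iff_unique_mem.2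
      exact ⟨mem_univ _, fun x _ => funext fun i => i.elim0⟩
    have hhist : hist 0 k (fun i => i.elim0) = fun _ => 0 := by
      funext v
      simp [hist]
    by_cases hz : ∑ i, z i = 0
    · have hz0 : z = fun _ => 0 := by
        funext v
        have := Finset.sum_eq_zero_iff.1 hz v (mem_univ v)
        simpa using this
      have hmz : Nat.multinomial univ z = 1 := by
        have spec := Nat.multinomial_spec univ z
        subst hz0
        simpa using spec
      rw [if_pos hz, hmz, huniv]
      rw [Finset.filter_singleton, if_pos (by rw [hhist, hz0])]
      simp
    · rw [if_neg hz, huniv, Finset.filter_singleton]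
      rw [if_neg, Finset.card_empty]
      rw [hhist]
      intro h
      apply hz
      rw [← h]
      simp
  | succ m ih =>
    intro z
    have hterm : ∀ w : Fin k,
        (univ.filter fun x : Fin (m+1) → Fin k =>
            hist (m+1) k x = z ∧ x 0 = w).card
        = if 1 ≤ z w then
            (if ∑ i, z i = m + 1 then
              Nat.multinomial univ (Function.update z w (z w - 1)) else 0)
          else 0 := by
      intro w
      rw [count_first, ih]
      by_cases hw : 1 ≤ z w
      · rw [if_pos hw, if_pos hw, sum_update_dec k z w hw]
        have h1 : 1 ≤ ∑ i, z i :=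
          le_trans hw (Finset.single_le_sum (fun i _ => Nat.zero_le _) (mem_univ w))
        have hiff : ((∑ i, z i) - 1 = m) ↔ (∑ i, z i = m + 1) := by omega
        rw [if_congr hiff rfl rfl]
      · rw [if_neg hw, if_neg hw]
    have hsplit : (univ.filter fun x : Fin (m+1) → Fin k => hist (m+1) k x = z).card
        = ∑ w : Fin k, (univ.filter fun x : Fin (m+1) → Fin k =>
            hist (m+1) k x = z ∧ x 0 = w).card := by
      rw [Finset.card_eq_sum_card_fiberwise
        (f := fun x : Fin (m+1) → Fin k => x 0) (t := univ) (fun x _ => mem_univ _)]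
      apply Finset.sum_congr rfl
      intro w _
      rw [Finset.filter_filter]
    rw [hsplit]
    simp only [hterm]
    by_cases hz : ∑ i, z i = m + 1
    · rw [if_pos hz]
      simp only [if_pos hz]
      apply Nat.eq_of_mul_eq_mul_left (Nat.succ_pos m)
      rw [Finset.mul_sum]
      have key : ∀ w : Fin k, (m + 1) * (if 1 ≤ z w then
            Nat.multinomial univ (Function.update z w (z w - 1)) else 0)
          = z w * Nat.multinomial univ z := by
        intro w
        by_cases hw : 1 ≤ z w
        · rw [if_pos hw, ← hz, ← mult_dec k z w hw]
        · rw [if_neg hw, Nat.eq_zero_of_not_pos hw]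
          ring
      rw [Finset.sum_congr rfl fun w _ => key w, ← Finset.sum_mul, hz]
    · rw [if_neg hz]
      simp only [if_neg hz]
      simp

lemma image_hist_eq (n k : ℕ) :
    (univ : Finset (Fin n → Fin k)).image (hist n k)
      = Finset.Nat.antidiagonalTuple k n := by
  ext z
  rw [Finset.mem_image, Finset.Nat.mem_antidiagonalTuple]
  constructor
  · rintro ⟨x, -, rfl⟩
    exact hist_sum n k x
  · intro hz
    have h := count_hist k n z
    rw [if_pos hz] at h
    have hpos : 0 < (univ.filter fun x : Fin n → Fin k => hist n k x = z).card := by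
      rw [h]
      exact Nat.multinomial_pos _ _
    obtain ⟨x, hx⟩ := Finset.card_pos.1 hpos
    rw [mem_filter] at hx
    exact ⟨x, mem_univ _, hx.2⟩


/-- the posterior single-target vulnerability of the shuffle
channel under the uniform prior equals
(1/k^n) · Σ_{(n₀,…,n_{k−1})} C(n; n₀,…,n_{k−1}) · max_j(n_j) / n. -/
theorem stmt13 (n k : ℕ) (hn : 1 ≤ n) (hk : 1 ≤ k) :
    (1 / (k : ℝ) ^ n) * ∑ f ∈ Finset.Nat.antidiagonalTuple k n,
        (Nat.multinomial Finset.univ f : ℝ) * (Finset.univ.sup f : ℕ) / n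
      = ∑ z ∈ Finset.univ.image (hist n k),
          Finset.univ.sup' ⟨⟨0, by omega⟩, Finset.mem_univ _⟩ (fun w : Fin k =>
            (1 / (k : ℝ) ^ n) *
              ((Finset.univ.filter fun x : Fin n → Fin k =>
                  hist n k x = z ∧ x ⟨0, by omega⟩ = w).card : ℝ)) := by
  rw [image_hist_eq, Finset.mul_sum]
  apply Finset.sum_congr rfl
  intro z hz
  rw [Finset.Nat.mem_antidiagonalTuple] at hz
  obtain ⟨m, rfl⟩ : ∃ m, n = m + 1 := ⟨n - 1, by omega⟩
  have hnat : ∀ w : Fin k,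
      (m + 1) * (univ.filter fun x : Fin (m+1) → Fin k =>
          hist (m+1) k x = z ∧ x ⟨0, by omega⟩ = w).card
        = z w * Nat.multinomial univ z := by
    intro w
    have h0 : (⟨0, by omega⟩ : Fin (m+1)) = 0 := rfl
    rw [h0, count_first]
    by_cases hw : 1 ≤ z w
    · rw [if_pos hw, count_hist, sum_update_dec k z w hw, hz,
        if_pos (show m + 1 - 1 = m by omega)]
      have hd := mult_dec k z w hw
      rw [hz] at hd
      exact hd.symm
    · rw [if_neg hw, Nat.eq_zero_of_not_pos hw]
      ring
  have hreal : ∀ w : Fin k,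
      ((univ.filter fun x : Fin (m+1) → Fin k =>
          hist (m+1) k x = z ∧ x ⟨0, by omega⟩ = w).card : ℝ)
        = (z w : ℝ) * (Nat.multinomial univ z : ℝ) / ((m : ℝ) + 1) := by
    intro w
    have hcast : ((m:ℝ) + 1) * ((univ.filter fun x : Fin (m+1) → Fin k =>
        hist (m+1) k x = z ∧ x ⟨0, by omega⟩ = w).card : ℝ)
        = (z w : ℝ) * (Nat.multinomial univ z : ℝ) := by
      exact_mod_cast congrArg (Nat.cast : ℕ → ℝ) (hnat w)
    rw [eq_div_iff (show ((m:ℝ)+1) ≠ 0 by positivity)]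
    linear_combination hcast
  have hc : (0:ℝ) ≤ 1 / (k : ℝ) ^ (m+1) := by positivity
  apply le_antisymm
  · obtain ⟨w0, -, hw0⟩ := Finset.exists_mem_eq_sup (univ : Finset (Fin k))
      ⟨⟨0, by omega⟩, Finset.mem_univ _⟩ z
    refine le_trans (le_of_eq ?_) (Finset.le_sup' _ (Finset.mem_univ w0))
    rw [hreal w0, hw0]
    push_cast
    ring
  · apply Finset.sup'_le
    intro w _
    rw [hreal w]
    push_cast
    have hzw : (z w : ℝ) ≤ ((univ.sup z : ℕ) : ℝ) := by
      exact_mod_cast Finset.le_sup (f := z) (mem_univ w)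
    have hm : (0:ℝ) ≤ (Nat.multinomial univ z : ℝ) := Nat.cast_nonneg _
    apply mul_le_mul_of_nonneg_left _ hc
    rw [div_le_div_iff₀ (by positivity) (by positivity)]
    nlinarith [mul_le_mul_of_nonneg_left hzw hm, (show (0:ℝ) ≤ (m:ℝ) from Nat.cast_nonneg m)]
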